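/- Let A ⊆ B(X) be an abelian, unital, semisimple, norm-closed subalgebra of split strict multiplicity 2, and L ⊆ A a norm-closed subspace. If T ∈ B(X) satisfies Tx ∈ closure(Lx) for all x ∈ X, then there exists l₀ ∈ L with (T − T_{l₀})(x) ∈ R₁ ⊕ R₂ for every x ∈ X. -/

import Mathlib

set_option synthInstance.maxHeartbeats 1000000
set_option maxHeartbeats 1000000

/-- The annihilator ideal `Iⱼ = {a ∈ A : a xⱼ = 0}` of a vector. -/
def annIdeal {X : Type*} [NormedAddCommGroup X] [NormedSpace ℂ X]
    (A : Subalgebra ℂ (X →L[ℂ] X)) (x : X) : Ideal ↥A where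
  carrier := {a | (a : X →L[ℂ] X) x = 0}
  add_mem' := fun {a b} ha hb => by
    simp only [Set.mem_setOf_eq] at *
    rw [Subalgebra.coe_add, ContinuousLinearMap.add_apply, ha, hb, add_zero]
  zero_mem' := by simp
  smul_mem' := fun c a ha => by
    simp only [Set.mem_setOf_eq, smul_eq_mul] at *
    rw [Subalgebra.coe_mul, ContinuousLinearMap.mul_apply, ha, map_zero]

/-- `c ∈ A` maps into the radical of `A/I`, i.e. `c` lies in every maximal ideal
of `A` containing the annihilator ideal of `x`. -/
def inRadical {X : Type*} [NormedAddCommGroup X] [NormedSpace ℂ X]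
    (A : Subalgebra ℂ (X →L[ℂ] X)) (x : X) (c : ↥A) : Prop :=
  ∀ M : Ideal ↥A, M.IsMaximal → annIdeal A x ≤ M → c ∈ M

/-- The orbit `A x` as a submodule of `X`. -/
def orbSub {X : Type*} [NormedAddCommGroup X] [NormedSpace ℂ X]
    (A : Subalgebra ℂ (X →L[ℂ] X)) (x : X) : Submodule ℂ X where
  carrier := {y | ∃ a ∈ A, a x = y}
  add_mem' := fun {y z} hy hz => by
    obtain ⟨a, ha, hay⟩ := hy; obtain ⟨b, hb, hbz⟩ := hz
    exact ⟨a + b, A.add_mem ha hb, by simp [hay, hbz]⟩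
  zero_mem' := ⟨0, A.zero_mem , by simp⟩
  smul_mem' := fun c y hy => by
    obtain ⟨a, ha, hay⟩ := hy
    exact ⟨c • a, A.smul_mem ha c, by simp [hay]⟩

/-- Evaluation at `x` as a continuous linear map on `↥A`. -/
noncomputable def evx {X : Type*} [NormedAddCommGroup X] [NormedSpace ℂ X]
    (A : Subalgebra ℂ (X →L[ℂ] X)) (x : X) : ↥A →L[ℂ] X :=
  LinearMap.mkContinuous
    { toFun := fun a => (a : X →L[ℂ] X) x
      map_add' := fun a b => by simp
      map_smul' := fun c a => by simp }
    ‖x‖ (fun a => by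
      calc ‖(a : X →L[ℂ] X) x‖ ≤ ‖(a : X →L[ℂ] X)‖ * ‖x‖ := (a : X →L[ℂ] X).le_opNorm x
      _ = ‖x‖ * ‖a‖ := by rw [mul_comm]; rfl)

@[simp] lemma evx_apply {X : Type*} [NormedAddCommGroup X] [NormedSpace ℂ X]
    (A : Subalgebra ℂ (X →L[ℂ] X)) (x : X) (a : ↥A) :
    evx A x a = (a : X →L[ℂ] X) x := rfl

set_option maxHeartbeats 4000000 in
lemma gmAux {X : Type*} [NormedAddCommGroup X] [NormedSpace ℂ X] [CompleteSpace X]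
    (A : Subalgebra ℂ (X →L[ℂ] X)) (hA : IsClosed (A : Set (X →L[ℂ] X)))
    (hcomm : ∀ a b : ↥A, a * b = b * a) (M : Ideal ↥A) (hM : M.IsMaximal) :
    IsClosed (M : Set ↥A) ∧ ∀ a : ↥A, ∃ μ : ℂ, a - μ • (1 : ↥A) ∈ M := by
  haveI : CompleteSpace ↥A := hA.completeSpace_coe
  haveI := hM
  refine ⟨Ideal.IsMaximal.isClosed, ?_⟩
  letI : NormedCommRing ↥A := { (inferInstance : NormedRing ↥A) with mul_comm := hcomm }
  intro a
  let φ := M.toCharacterSpace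
  have hφM : ∀ z : ↥A, z ∈ M → φ z = 0 := fun z hz =>
    M.toCharacterSpace_apply_eq_zero_of_mem hz
  have hker : ∀ z : ↥A, φ z = 0 → z ∈ M := by
    intro z hz
    by_contra hzM
    rcases eq_or_ne (M ⊔ Ideal.span {z}) ⊤ with htop | hne
    · have h1 : (1 : ↥A) ∈ M ⊔ Ideal.span {z} := htop ▸ Submodule.mem_top
      rcases Submodule.mem_sup.mp h1 with ⟨m, hm, w, hw, hmw⟩
      rcases Submodule.mem_span_singleton.mp hw with ⟨r, rfl⟩
      have h2 := congrArg φ hmw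
      rw [map_add, map_one, smul_eq_mul, map_mul, hφM m hm, hz, mul_zero, add_zero] at h2
      exact one_ne_zero h2.symm
    · exact hzM (hM.eq_of_le hne le_sup_left ▸
        (le_sup_right : Ideal.span {z} ≤ M ⊔ Ideal.span {z}) (Ideal.subset_span rfl))
  refine ⟨φ a, hker _ ?_⟩
  rw [map_sub, map_smul, map_one, smul_eq_mul, mul_one, sub_self]

set_option maxHeartbeats 4000000 in
lemma component {X : Type*} [NormedAddCommGroup X] [NormedSpace ℂ X] [CompleteSpace X]
    (A : Subalgebra ℂ (X →L[ℂ] X)) (hA : IsClosed (A : Set (X →L[ℂ] X)))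
    (hcomm : ∀ a b : ↥A, a * b = b * a)
    (x x' : X)
    (hc : IsClosed {y : X | ∃ a ∈ A, a x = y})
    (hind : ∀ a ∈ A, ∀ b ∈ A, a x + b x' = 0 → a x = 0)
    (L : Submodule ℂ (X →L[ℂ] X)) (hLA : (L : Set (X →L[ℂ] X)) ⊆ (A : Set (X →L[ℂ] X)))
    (T : X →L[ℂ] X) (hT : ∀ y : X, T y ∈ closure {z : X | ∃ l ∈ L, l y = z})
    (l₀ : ↥A) (hl₀x : T x = (l₀ : X →L[ℂ] X) x)
    (a b d₁ d₂ : ↥A)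
    (hbx' : ∃ g : ↥A, (g : X →L[ℂ] X) x' = T ((b : X →L[ℂ] X) x'))
    (hd : T ((a : X →L[ℂ] X) x + (b : X →L[ℂ] X) x')
        = (d₁ : X →L[ℂ] X) x + (d₂ : X →L[ℂ] X) x')
    (M : Ideal ↥A) (hM : M.IsMaximal) (hIM : annIdeal A x ≤ M) :
    d₁ - l₀ * a ∈ M := by
  haveI : CompleteSpace ↥A := hA.completeSpace_coe
  obtain ⟨hMc, hGM⟩ := gmAux A hA hcomm M hM
  obtain ⟨μ, hmM⟩ := hGM a
  set m : ↥A := a - μ • 1 with hm_def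
  -- the orbit submodule of x
  set S : Submodule ℂ X := orbSub A x with hS_def
  have hSmem : ∀ z : X, z ∈ S ↔ ∃ a ∈ A, a x = z := fun z => Iff.rfl
  have hSc : IsClosed (S : Set X) := hc
  haveI : CompleteSpace ↥S := hSc.completeSpace_coe
  -- open mapping constant for the orbit map
  have hqmem : ∀ c : ↥A, evx A x c ∈ S := fun c => ⟨(c : X →L[ℂ] X), c.2, rfl⟩
  set q : ↥A →L[ℂ] ↥S := (evx A x).codRestrict S hqmem with hq_def
  have hqsurj : Function.Surjective q := by
    rintro ⟨z, hz⟩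
    obtain ⟨c, hcA, hcz⟩ := hz
    exact ⟨⟨c, hcA⟩, Subtype.ext hcz⟩
  obtain ⟨C, hCpos, hC⟩ := q.exists_preimage_norm_le hqsurj
  -- products l * c for l ∈ L land in the orbit
  have hmulmem : ∀ (l : X →L[ℂ] X), l ∈ L → ∀ c : ↥A,
      l ((c : X →L[ℂ] X) x) ∈ S := by
    intro l hl c
    refine ⟨l * (c : X →L[ℂ] X), A.mul_mem (hLA hl) c.2, rfl⟩
  -- T maps the orbit of x into the orbit of x
  have hTS : ∀ c : ↥A, T ((c : X →L[ℂ] X) x) ∈ S := by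
    intro c
    have hsub : {z : X | ∃ l ∈ L, l ((c : X →L[ℂ] X) x) = z} ⊆ (S : Set X) := by
      rintro z ⟨l, hl, rfl⟩
      exact hmulmem l hl c
    have := hT ((c : X →L[ℂ] X) x)
    have h2 := closure_mono hsub this
    rwa [hSc.closure_eq] at h2
  -- key: if c ∈ M then the "component" of T (c x) is in M
  have hkey : ∀ c : ↥A, c ∈ M → ∀ d : ↥A,
      (d : X →L[ℂ] X) x = T ((c : X →L[ℂ] X) x) → d ∈ M := by
    intro c hcM d hd
    have hdc : d ∈ closure (M : Set ↥A) := by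
      rw [Metric.mem_closure_iff]
      intro ε hε
      have hδpos : 0 < ε / (C + 1) := by positivity
      obtain ⟨z, hzS, hzd⟩ := Metric.mem_closure_iff.mp (hT ((c : X →L[ℂ] X) x)) _ hδpos
      obtain ⟨l, hlL, hlz⟩ := hzS
      set l' : ↥A := ⟨l, hLA hlL⟩ with hl'_def
      have hzS' : z ∈ S := by rw [← hlz]; exact hmulmem l hlL c
      have humem : (d : X →L[ℂ] X) x - z ∈ S := S.sub_mem ⟨d, d.2, rfl⟩ hzS'
      obtain ⟨e, he, hne⟩ := hC ⟨(d : X →L[ℂ] X) x - z, humem⟩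
      have he' : (e : X →L[ℂ] X) x = (d : X →L[ℂ] X) x - z := congrArg Subtype.val he
      have hl'c : ((l' * c : ↥A) : X →L[ℂ] X) x = z := by
        rw [Subalgebra.coe_mul, ContinuousLinearMap.mul_apply]
        exact hlz
      have hdm : d - e - l' * c ∈ annIdeal A x := by
        show ((d - e - l' * c : ↥A) : X →L[ℂ] X) x = 0
        simp only [AddSubgroupClass.coe_sub, ContinuousLinearMap.sub_apply, he', hl'c]
        abel
      have hdeM : d - e ∈ M := by
        have h1 := M.add_mem (hIM hdm) (M.mul_mem_left l' hcM)
        rwa [sub_add_cancel] at h1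
      refine ⟨d - e, hdeM, ?_⟩
      have hdist : dist d (d - e) = ‖e‖ := by
        rw [dist_eq_norm]
        congr 1
        abel
      have hnu : ‖(⟨(d : X →L[ℂ] X) x - z, humem⟩ : ↥S)‖ = dist (T ((c : X →L[ℂ] X) x)) z := by
        rw [dist_eq_norm, ← hd]
        rfl
      rw [hdist]
      calc ‖e‖ ≤ C * ‖(⟨(d : X →L[ℂ] X) x - z, humem⟩ : ↥S)‖ := hne
        _ < C * (ε / (C + 1)) := by
            rw [hnu]
            exact mul_lt_mul_of_pos_left hzd hCpos
        _ < ε := by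
            have h1 : C / (C + 1) < 1 := by
              rw [div_lt_one (by linarith)]
              linarith
            calc C * (ε / (C + 1)) = C / (C + 1) * ε := by ring
              _ < 1 * ε := mul_lt_mul_of_pos_right h1 hε
              _ = ε := one_mul ε
    rwa [hMc.closure_eq] at hdc
  -- assemble
  obtain ⟨g, hg⟩ := hbx'
  obtain ⟨d'', hd''A, hd''⟩ := hTS m
  set d' : ↥A := ⟨d'', hd''A⟩ with hd'_def
  have hd'x : (d' : X →L[ℂ] X) x = T ((m : X →L[ℂ] X) x) := hd''
  have hd'M : d' ∈ M := hkey m hmM d' hd'x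
  have ham : (a : ↥A) = μ • 1 + m := by rw [hm_def]; abel
  have hax : (a : X →L[ℂ] X) x = μ • x + (m : X →L[ℂ] X) x := by
    rw [ham]
    simp only [Subalgebra.coe_add, SetLike.val_smul, Subalgebra.coe_one,
      ContinuousLinearMap.add_apply, ContinuousLinearMap.smul_apply,
      ContinuousLinearMap.one_apply]
  have hTy : T ((a : X →L[ℂ] X) x + (b : X →L[ℂ] X) x')
      = (μ • ((l₀ : X →L[ℂ] X) x) + (d' : X →L[ℂ] X) x) + (g : X →L[ℂ] X) x' := by
    rw [hax, add_assoc, map_add, map_add, map_smul, hl₀x, hd'x, hg, ← add_assoc]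
  have heq : (d₁ : X →L[ℂ] X) x + (d₂ : X →L[ℂ] X) x'
      = (μ • ((l₀ : X →L[ℂ] X) x) + (d' : X →L[ℂ] X) x) + (g : X →L[ℂ] X) x' :=
    hd.symm.trans hTy
  have h0 : ((d₁ - (μ • l₀ + d') : ↥A) : X →L[ℂ] X) x
      + ((d₂ - g : ↥A) : X →L[ℂ] X) x' = 0 := by
    simp only [AddSubgroupClass.coe_sub, Subalgebra.coe_add, SetLike.val_smul,
      ContinuousLinearMap.sub_apply, ContinuousLinearMap.add_apply,
      ContinuousLinearMap.smul_apply]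
    rw [sub_add_sub_comm, heq]
    abel
  have h1 : ((d₁ - (μ • l₀ + d') : ↥A) : X →L[ℂ] X) x = 0 :=
    hind _ (d₁ - (μ • l₀ + d') : ↥A).2 _ (d₂ - g : ↥A).2 h0
  have h1mem : d₁ - (μ • l₀ + d') ∈ annIdeal A x := h1
  have hlm : l₀ * m = l₀ * a - μ • l₀ := by
    rw [hm_def, mul_sub, mul_smul_comm, mul_one]
  have hfin : d₁ - l₀ * a = (d₁ - (μ • l₀ + d')) + d' - l₀ * m := by
    rw [hlm]
    abel
  rw [hfin]
  exact M.sub_mem (M.add_mem (hIM h1mem) hd'M) (M.mul_mem_left l₀ hmM)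


/-- Let `A ⊆ B(X)` be abelian, unital, semisimple, norm-closed, of split strict
multiplicity `2`, and `L ⊆ A` a norm-closed subspace. If `T x ∈ closure (L x)`
for all `x`, then there is `l₀ ∈ L` with `(T - T_{l₀}) x ∈ R₁ ⊕ R₂` for all `x`. -/
theorem stmt14 {X : Type*} [NormedAddCommGroup X] [NormedSpace ℂ X] [CompleteSpace X]
    (A : Subalgebra ℂ (X →L[ℂ] X))
    (hA : IsClosed (A : Set (X →L[ℂ] X)))
    (hcomm : ∀ a ∈ A, ∀ b ∈ A, a * b = b * a)
    (hsemisimple : ∀ c : ↥A, (∀ M : Ideal ↥A, M.IsMaximal → c ∈ M) → c = 0)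
    (x₁ x₂ : X)
    (hc1 : IsClosed {y : X | ∃ a ∈ A, a x₁ = y})
    (hc2 : IsClosed {y : X | ∃ a ∈ A, a x₂ = y})
    (hspan : ∀ y : X, ∃ a ∈ A, ∃ b ∈ A, y = a x₁ + b x₂)
    (hind : ∀ a ∈ A, ∀ b ∈ A, a x₁ + b x₂ = 0 → a x₁ = 0 ∧ b x₂ = 0)
    (L : Submodule ℂ (X →L[ℂ] X))
    (hLA : (L : Set (X →L[ℂ] X)) ⊆ (A : Set (X →L[ℂ] X)))
    (hLclosed : IsClosed (L : Set (X →L[ℂ] X)))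
    (T : X →L[ℂ] X)
    (hT : ∀ y : X, T y ∈ closure {z : X | ∃ l ∈ L, l y = z}) :
    ∃ l₀ ∈ L, ∀ y : X, ∃ c₁ c₂ : ↥A,
      inRadical A x₁ c₁ ∧ inRadical A x₂ c₂ ∧
      T y - l₀ y = ((c₁ : X →L[ℂ] X)) x₁ + ((c₂ : X →L[ℂ] X)) x₂ := by
  haveI : CompleteSpace ↥A := hA.completeSpace_coe
  have hcomm' : ∀ a b : ↥A, a * b = b * a := fun a b =>
    Subtype.ext (hcomm a a.2 b b.2)
  set S₁ : Submodule ℂ X := orbSub A x₁ with hS₁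
  set S₂ : Submodule ℂ X := orbSub A x₂ with hS₂
  have hS₁c : IsClosed (S₁ : Set X) := hc1
  have hS₂c : IsClosed (S₂ : Set X) := hc2
  haveI : CompleteSpace ↥S₁ := hS₁c.completeSpace_coe
  haveI : CompleteSpace ↥S₂ := hS₂c.completeSpace_coe
  -- T maps orbits into orbits
  have horb : ∀ (x : X), IsClosed {y : X | ∃ a ∈ A, a x = y} → ∀ c : ↥A,
      ∃ g : ↥A, (g : X →L[ℂ] X) x = T ((c : X →L[ℂ] X) x) := by
    intro x hx c
    have hsub : {z : X | ∃ l ∈ L, l ((c : X →L[ℂ] X) x) = z}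
        ⊆ {y : X | ∃ a ∈ A, a x = y} := by
      rintro z ⟨l, hl, rfl⟩
      exact ⟨l * (c : X →L[ℂ] X), A.mul_mem (hLA hl) c.2, rfl⟩
    have h2 := closure_mono hsub (hT _)
    rw [hx.closure_eq] at h2
    obtain ⟨g, hgA, hgx⟩ := h2
    exact ⟨⟨g, hgA⟩, hgx⟩
  -- operator norm bound
  set Φ : ↥A × ↥A →L[ℂ] X :=
    ((evx A x₁).comp (ContinuousLinearMap.fst ℂ ↥A ↥A)) +
    ((evx A x₂).comp (ContinuousLinearMap.snd ℂ ↥A ↥A)) with hΦ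
  have hΦ_apply : ∀ p : ↥A × ↥A,
      Φ p = (p.1 : X →L[ℂ] X) x₁ + (p.2 : X →L[ℂ] X) x₂ := fun p => rfl
  have hΦsurj : Function.Surjective Φ := by
    intro y
    obtain ⟨a, ha, b, hb, hy⟩ := hspan y
    exact ⟨(⟨a, ha⟩, ⟨b, hb⟩), by rw [hΦ_apply]; exact hy.symm⟩
  obtain ⟨C₀, hC₀pos, hC₀⟩ := Φ.exists_preimage_norm_le hΦsurj
  have hopb : ∀ l : ↥A, ‖(l : X →L[ℂ] X)‖
      ≤ C₀ * (‖(l : X →L[ℂ] X) x₁‖ + ‖(l : X →L[ℂ] X) x₂‖) := by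
    intro l
    refine ContinuousLinearMap.opNorm_le_bound _ (by positivity) (fun z => ?_)
    obtain ⟨p, hp, hn⟩ := hC₀ z
    have hswap1 : (l : X →L[ℂ] X) ((p.1 : X →L[ℂ] X) x₁)
        = (p.1 : X →L[ℂ] X) ((l : X →L[ℂ] X) x₁) := by
      have := congrArg (fun t : ↥A => ((t : X →L[ℂ] X)) x₁) (hcomm' l p.1)
      simpa [Subalgebra.coe_mul, ContinuousLinearMap.mul_apply] using this
    have hswap2 : (l : X →L[ℂ] X) ((p.2 : X →L[ℂ] X) x₂)
        = (p.2 : X →L[ℂ] X) ((l : X →L[ℂ] X) x₂) := by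
      have := congrArg (fun t : ↥A => ((t : X →L[ℂ] X)) x₂) (hcomm' l p.2)
      simpa [Subalgebra.coe_mul, ContinuousLinearMap.mul_apply] using this
    have h1 : (l : X →L[ℂ] X) z
        = (p.1 : X →L[ℂ] X) ((l : X →L[ℂ] X) x₁)
          + (p.2 : X →L[ℂ] X) ((l : X →L[ℂ] X) x₂) := by
      rw [← hp, hΦ_apply, map_add, hswap1, hswap2]
    have hp1 : ‖p.1‖ ≤ C₀ * ‖z‖ := le_trans (norm_fst_le p) hn
    have hp2 : ‖p.2‖ ≤ C₀ * ‖z‖ := le_trans (norm_snd_le p) hn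
    calc ‖(l : X →L[ℂ] X) z‖
        ≤ ‖(p.1 : X →L[ℂ] X) ((l : X →L[ℂ] X) x₁)‖
          + ‖(p.2 : X →L[ℂ] X) ((l : X →L[ℂ] X) x₂)‖ := by
          rw [h1]; exact norm_add_le _ _
      _ ≤ ‖p.1‖ * ‖(l : X →L[ℂ] X) x₁‖ + ‖p.2‖ * ‖(l : X →L[ℂ] X) x₂‖ := by
          exact add_le_add ((p.1 : X →L[ℂ] X).le_opNorm _) ((p.2 : X →L[ℂ] X).le_opNorm _)
      _ ≤ (C₀ * ‖z‖) * ‖(l : X →L[ℂ] X) x₁‖ + (C₀ * ‖z‖) * ‖(l : X →L[ℂ] X) x₂‖ := by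
          exact add_le_add (mul_le_mul_of_nonneg_right hp1 (norm_nonneg _))
            (mul_le_mul_of_nonneg_right hp2 (norm_nonneg _))
      _ = C₀ * (‖(l : X →L[ℂ] X) x₁‖ + ‖(l : X →L[ℂ] X) x₂‖) * ‖z‖ := by ring
  -- projection bound
  set Ψ : ↥S₁ × ↥S₂ →L[ℂ] X :=
    (S₁.subtypeL.comp (ContinuousLinearMap.fst ℂ ↥S₁ ↥S₂)) +
    (S₂.subtypeL.comp (ContinuousLinearMap.snd ℂ ↥S₁ ↥S₂)) with hΨ
  have hΨ_apply : ∀ p : ↥S₁ × ↥S₂, Ψ p = (p.1 : X) + (p.2 : X) := fun p => rfl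
  have hΨsurj : Function.Surjective Ψ := by
    intro y
    obtain ⟨a, ha, b, hb, hy⟩ := hspan y
    exact ⟨(⟨a x₁, ⟨a, ha, rfl⟩⟩, ⟨b x₂, ⟨b, hb, rfl⟩⟩), by rw [hΨ_apply]; exact hy.symm⟩
  obtain ⟨C₁, hC₁pos, hC₁⟩ := Ψ.exists_preimage_norm_le hΨsurj
  have hproj : ∀ (u : ↥S₁) (v : ↥S₂), ‖(u : X)‖ ≤ C₁ * ‖(u : X) + (v : X)‖
      ∧ ‖(v : X)‖ ≤ C₁ * ‖(u : X) + (v : X)‖ := by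
    intro u v
    obtain ⟨p, hp, hn⟩ := hC₁ ((u : X) + (v : X))
    rw [hΨ_apply] at hp
    have h0 : ((p.1 : X) - (u : X)) + ((p.2 : X) - (v : X)) = 0 := by
      rw [sub_add_sub_comm, hp, sub_self]
    obtain ⟨aa, haa, haa'⟩ := S₁.sub_mem p.1.2 u.2
    obtain ⟨bb, hbb, hbb'⟩ := S₂.sub_mem p.2.2 v.2
    have h1 : aa x₁ + bb x₂ = 0 := by rw [haa', hbb']; exact h0
    have h2 := hind aa haa bb hbb h1
    have hpu : (p.1 : X) = (u : X) := by
      have := h2.1; rw [haa'] at this; exact sub_eq_zero.mp this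
    have hpv : (p.2 : X) = (v : X) := by
      have := h2.2; rw [hbb'] at this; exact sub_eq_zero.mp this
    constructor
    · calc ‖(u : X)‖ = ‖p.1‖ := by rw [show ‖p.1‖ = ‖(p.1 : X)‖ from rfl, hpu]
        _ ≤ ‖p‖ := norm_fst_le p
        _ ≤ C₁ * ‖(u : X) + (v : X)‖ := hn
    · calc ‖(v : X)‖ = ‖p.2‖ := by rw [show ‖p.2‖ = ‖(p.2 : X)‖ from rfl, hpv]
        _ ≤ ‖p‖ := norm_snd_le p
        _ ≤ C₁ * ‖(u : X) + (v : X)‖ := hn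
  -- bound by value at y₀
  set y₀ : X := x₁ + x₂ with hy₀
  have hbnd : ∀ l : ↥A, ‖(l : X →L[ℂ] X)‖
      ≤ (C₀ * (2 * C₁)) * ‖(l : X →L[ℂ] X) y₀‖ := by
    intro l
    have hsum : ((l : X →L[ℂ] X) x₁) + ((l : X →L[ℂ] X) x₂) = (l : X →L[ℂ] X) y₀ := by
      rw [hy₀, map_add]
    have hu := hproj ⟨(l : X →L[ℂ] X) x₁, ⟨_, l.2, rfl⟩⟩ ⟨(l : X →L[ℂ] X) x₂, ⟨_, l.2, rfl⟩⟩
    have h₁ : ‖(l : X →L[ℂ] X) x₁‖ ≤ C₁ * ‖(l : X →L[ℂ] X) y₀‖ := by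
      have := hu.1; rwa [hsum] at this
    have h₂ : ‖(l : X →L[ℂ] X) x₂‖ ≤ C₁ * ‖(l : X →L[ℂ] X) y₀‖ := by
      have := hu.2; rwa [hsum] at this
    calc ‖(l : X →L[ℂ] X)‖ ≤ C₀ * (‖(l : X →L[ℂ] X) x₁‖ + ‖(l : X →L[ℂ] X) x₂‖) := hopb l
      _ ≤ C₀ * (C₁ * ‖(l : X →L[ℂ] X) y₀‖ + C₁ * ‖(l : X →L[ℂ] X) y₀‖) := by
          exact mul_le_mul_of_nonneg_left (add_le_add h₁ h₂) (le_of_lt hC₀pos)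
      _ = (C₀ * (2 * C₁)) * ‖(l : X →L[ℂ] X) y₀‖ := by ring
  -- extract l₀
  obtain ⟨gseq, hgS, hglim⟩ := mem_closure_iff_seq_limit.mp (hT y₀)
  choose lseq hlL hle using hgS
  have hlA : ∀ n, lseq n ∈ A := fun n => hLA (hlL n)
  have hKpos : (0:ℝ) < C₀ * (2 * C₁) := by positivity
  have hcauchy : CauchySeq lseq := by
    rw [Metric.cauchySeq_iff]
    intro ε hε
    have hgc := hglim.cauchySeq
    rw [Metric.cauchySeq_iff] at hgc
    obtain ⟨N, hN⟩ := hgc (ε / (C₀ * (2 * C₁) + 1)) (by positivity)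
    refine ⟨N, fun p hp n hn => ?_⟩
    have hdist := hN p hp n hn
    set δel : ↥A := ⟨lseq p - lseq n, A.sub_mem (hlA p) (hlA n)⟩ with hδel
    have hδy : (δel : X →L[ℂ] X) y₀ = gseq p - gseq n := by
      rw [show ((δel : X →L[ℂ] X)) = lseq p - lseq n from rfl,
        ContinuousLinearMap.sub_apply, hle p, hle n]
    calc dist (lseq p) (lseq n) = ‖lseq p - lseq n‖ := dist_eq_norm _ _
      _ ≤ (C₀ * (2 * C₁)) * ‖(δel : X →L[ℂ] X) y₀‖ := hbnd δel
      _ = (C₀ * (2 * C₁)) * dist (gseq p) (gseq n) := by rw [hδy, ← dist_eq_norm]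
      _ < (C₀ * (2 * C₁)) * (ε / (C₀ * (2 * C₁) + 1)) := by
          exact mul_lt_mul_of_pos_left hdist hKpos
      _ < ε := by
          have h1 : (C₀ * (2 * C₁)) / (C₀ * (2 * C₁) + 1) < 1 := by
            rw [div_lt_one (by linarith)]
            linarith
          calc (C₀ * (2 * C₁)) * (ε / (C₀ * (2 * C₁) + 1))
              = (C₀ * (2 * C₁)) / (C₀ * (2 * C₁) + 1) * ε := by ring
            _ < 1 * ε := mul_lt_mul_of_pos_right h1 hε
            _ = ε := one_mul ε
  obtain ⟨l₀, hl₀lim⟩ := cauchySeq_tendsto_of_complete hcauchy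
  have hl₀L : l₀ ∈ L := hLclosed.mem_of_tendsto hl₀lim (Filter.Eventually.of_forall hlL)
  have happly : Filter.Tendsto (fun n => (lseq n) y₀) Filter.atTop (nhds (l₀ y₀)) :=
    ((ContinuousLinearMap.apply ℂ X y₀).continuous.tendsto l₀).comp hl₀lim
  have happly' : Filter.Tendsto gseq Filter.atTop (nhds (l₀ y₀)) := by
    have : (fun n => (lseq n) y₀) = gseq := funext hle
    rwa [this] at happly
  have hl₀y₀ : l₀ y₀ = T y₀ := tendsto_nhds_unique happly' hglim
  set l₀' : ↥A := ⟨l₀, hLA hl₀L⟩ with hl₀'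
  -- T x₁ = l₀ x₁, T x₂ = l₀ x₂
  obtain ⟨e₁, he₁⟩ : ∃ g : ↥A, (g : X →L[ℂ] X) x₁ = T x₁ := by
    simpa using horb x₁ hc1 1
  obtain ⟨e₂, he₂⟩ : ∃ g : ↥A, (g : X →L[ℂ] X) x₂ = T x₂ := by
    simpa using horb x₂ hc2 1
  have hTsum : T x₁ + T x₂ = l₀ x₁ + l₀ x₂ := by
    have h := hl₀y₀
    rw [hy₀, map_add, map_add] at h
    exact h.symm
  have hsum0 : ((e₁ - l₀' : ↥A) : X →L[ℂ] X) x₁ + ((e₂ - l₀' : ↥A) : X →L[ℂ] X) x₂ = 0 := by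
    simp only [AddSubgroupClass.coe_sub, ContinuousLinearMap.sub_apply]
    rw [he₁, he₂, sub_add_sub_comm, hTsum, sub_self]
  have hpair := hind _ (e₁ - l₀' : ↥A).2 _ (e₂ - l₀' : ↥A).2 hsum0
  have hTx₁ : T x₁ = (l₀' : X →L[ℂ] X) x₁ := by
    have h := hpair.1
    rw [show ((e₁ - l₀' : ↥A) : X →L[ℂ] X) = (e₁ : X →L[ℂ] X) - (l₀' : X →L[ℂ] X)
      from rfl, ContinuousLinearMap.sub_apply, he₁] at h
    exact sub_eq_zero.mp h
  have hTx₂ : T x₂ = (l₀' : X →L[ℂ] X) x₂ := by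
    have h := hpair.2
    rw [show ((e₂ - l₀' : ↥A) : X →L[ℂ] X) = (e₂ : X →L[ℂ] X) - (l₀' : X →L[ℂ] X)
      from rfl, ContinuousLinearMap.sub_apply, he₂] at h
    exact sub_eq_zero.mp h
  -- conclusion
  refine ⟨l₀, hl₀L, fun y => ?_⟩
  obtain ⟨a0, ha0, b0, hb0, hy⟩ := hspan y
  obtain ⟨a1, ha1, b1, hb1, hTy⟩ := hspan (T y)
  refine ⟨(⟨a1, ha1⟩ : ↥A) - l₀' * ⟨a0, ha0⟩, (⟨b1, hb1⟩ : ↥A) - l₀' * ⟨b0, hb0⟩, ?_, ?_, ?_⟩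
  · intro M hM hIM
    have hind₁ : ∀ a ∈ A, ∀ b ∈ A, a x₁ + b x₂ = 0 → a x₁ = 0 :=
      fun a ha b hb h => (hind a ha b hb h).1
    have hd : T (((⟨a0, ha0⟩ : ↥A) : X →L[ℂ] X) x₁ + ((⟨b0, hb0⟩ : ↥A) : X →L[ℂ] X) x₂)
        = ((⟨a1, ha1⟩ : ↥A) : X →L[ℂ] X) x₁ + ((⟨b1, hb1⟩ : ↥A) : X →L[ℂ] X) x₂ := by
      show T (a0 x₁ + b0 x₂) = a1 x₁ + b1 x₂
      rw [← hy]; exact hTy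
    exact component A hA hcomm' x₁ x₂ hc1 hind₁ L hLA T hT l₀' hTx₁
      ⟨a0, ha0⟩ ⟨b0, hb0⟩ ⟨a1, ha1⟩ ⟨b1, hb1⟩ (horb x₂ hc2 ⟨b0, hb0⟩) hd M hM hIM
  · intro M hM hIM
    have hind₂ : ∀ a ∈ A, ∀ b ∈ A, a x₂ + b x₁ = 0 → a x₂ = 0 :=
      fun a ha b hb h => (hind b hb a ha (by rw [add_comm]; exact h)).2
    have hd : T (((⟨b0, hb0⟩ : ↥A) : X →L[ℂ] X) x₂ + ((⟨a0, ha0⟩ : ↥A) : X →L[ℂ] X) x₁)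
        = ((⟨b1, hb1⟩ : ↥A) : X →L[ℂ] X) x₂ + ((⟨a1, ha1⟩ : ↥A) : X →L[ℂ] X) x₁ := by
      show T (b0 x₂ + a0 x₁) = b1 x₂ + a1 x₁
      rw [add_comm (b0 x₂) (a0 x₁), add_comm (b1 x₂) (a1 x₁), ← hy]; exact hTy
    exact component A hA hcomm' x₂ x₁ hc2 hind₂ L hLA T hT l₀' hTx₂
      ⟨b0, hb0⟩ ⟨a0, ha0⟩ ⟨b1, hb1⟩ ⟨a1, ha1⟩ (horb x₁ hc1 ⟨a0, ha0⟩) hd M hM hIM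
  · show T y - l₀ y = (a1 - l₀ * a0) x₁ + (b1 - l₀ * b0) x₂
    rw [ContinuousLinearMap.sub_apply, ContinuousLinearMap.sub_apply,
      ContinuousLinearMap.mul_apply, ContinuousLinearMap.mul_apply,
      sub_add_sub_comm, ← hTy, ← map_add, ← hy]
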